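/- Let m ≥ 2. The number of cyclic subgroups of the direct product ℤ₂ × Q_{2^{m+1}} equals 2^m + 2m + 2. -/

import Mathlib

/-- `ℤ₂ × Q_{2^{m+1}}`, the direct product of the cyclic group of order 2 and the generalized
quaternion group of order `2^{m+1}`. -/
abbrev Z2ProdQuaternion (m : ℕ) : Type :=
  Multiplicative (ZMod 2) × QuaternionGroup (2 ^ (m - 1))


open Finset Subgroup QuaternionGroup

section General
set_option linter.unusedSectionVars false
variable {G : Type*} [Group G] [Fintype G] [DecidableEq G] [DecidableEq (Subgroup G)]

lemma isCyclic_zpowers (g : G) : IsCyclic (zpowers g) := by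
  refine ⟨⟨⟨g, mem_zpowers g⟩, fun x => ?_⟩⟩
  obtain ⟨x, hx⟩ := x
  obtain ⟨k, hk⟩ := hx
  exact ⟨k, Subtype.ext (by simpa using hk)⟩

lemma mem_image_zpowers_iff {H : Subgroup G} :
    H ∈ (univ : Finset G).image (fun g => zpowers g) ↔ IsCyclic H := by
  constructor
  · rintro h
    simp only [mem_image, mem_univ, true_and] at h
    obtain ⟨g, rfl⟩ := h
    exact _root_.isCyclic_zpowers g
  · intro h
    obtain ⟨⟨g, hg⟩, hgen⟩ := h.exists_generator
    simp only [mem_image, mem_univ, true_and]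
    refine ⟨g, le_antisymm ((zpowers_le).2 hg) fun x hx => ?_⟩
    obtain ⟨k, hk⟩ := hgen ⟨x, hx⟩
    exact ⟨k, by simpa using congrArg Subtype.val hk⟩

lemma fiber_count (d : ℕ) :
    ((univ : Finset G).filter fun g => orderOf g = d).card
      = (((univ : Finset G).image fun g => zpowers g).filter
          fun H : Subgroup G => Nat.card H = d).card * d.totient := by
  classical
  rw [Finset.card_eq_sum_card_fiberwise (f := fun g => zpowers g)
    (t := ((univ : Finset G).image fun g => zpowers g).filter fun H : Subgroup G => Nat.card H = d)
    (fun g hg => by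
      simp only [mem_coe, mem_filter, mem_univ, true_and] at hg ⊢
      exact ⟨mem_image_of_mem _ (mem_univ g), by rw [Nat.card_zpowers, hg]⟩)]
  refine (Finset.sum_congr rfl fun H hH => ?_).trans (by rw [Finset.sum_const, smul_eq_mul])
  simp only [mem_filter] at hH
  obtain ⟨hHS, hHd⟩ := hH
  have hcyc : IsCyclic H := mem_image_zpowers_iff.1 hHS
  have hcard : Fintype.card H = d := by rw [← Nat.card_eq_fintype_card, hHd]
  rw [← IsCyclic.card_orderOf_eq_totient (α := H) (d := d) (hcard ▸ dvd_rfl)]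
  refine Finset.card_bij (fun g hg => ⟨g, ?_⟩) ?_ ?_ ?_
  · simp only [mem_filter, mem_univ, true_and] at hg
    exact hg.2 ▸ mem_zpowers g
  · intro g hg
    simp only [mem_filter, mem_univ, true_and] at hg ⊢
    rw [Subgroup.orderOf_mk]
    exact hg.1
  · intro g hg g' hg' h
    exact congrArg Subtype.val h
  · rintro ⟨h, hh⟩ hmem
    simp only [mem_filter, mem_univ, true_and, Subgroup.orderOf_mk] at hmem
    refine ⟨h, ?_, rfl⟩
    simp only [mem_filter, mem_univ, true_and]
    refine ⟨hmem, Subgroup.eq_of_le_of_card_ge ((zpowers_le).2 hh) ?_⟩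
    rw [Nat.card_zpowers, hmem, hHd]

lemma card_cyclic_eq_sum :
    Nat.card {H : Subgroup G // IsCyclic H}
      = ∑ d ∈ (Fintype.card G).divisors,
          (((univ : Finset G).image fun g => zpowers g).filter
            fun H : Subgroup G => Nat.card H = d).card := by
  classical
  rw [← Finset.card_eq_sum_card_fiberwise (f := fun H : Subgroup G => Nat.card H)
    (fun H hH => Nat.mem_divisors.2 ⟨Nat.card_eq_fintype_card (α := G) ▸
      Subgroup.card_subgroup_dvd_card H, Fintype.card_ne_zero⟩)]
  rw [Nat.card_eq_fintype_card, Fintype.card_of_subtype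
    ((univ : Finset G).image fun g => zpowers g) (fun H => by
      rw [mem_image_zpowers_iff])]

end General



section Specific

lemma two_mul_pow {m : ℕ} (hm : 1 ≤ m) : 2 * 2 ^ (m - 1) = 2 ^ m := by
  rw [← pow_succ', Nat.sub_add_cancel hm]

lemma zmod_count (N : ℕ) [NeZero N] (d : ℕ) :
    ((univ : Finset (ZMod N)).filter fun i => addOrderOf i = d).card
      = if d ∣ N then d.totient else 0 := by
  split_ifs with h
  · exact IsAddCyclic.card_addOrderOf_eq_totient (by rwa [ZMod.card])
  · rw [Finset.card_eq_zero, Finset.filter_eq_empty_iff]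
    intro i _ hi
    have := addOrderOf_dvd_card (x := i)
    rw [ZMod.card] at this
    exact h (hi ▸ this)

variable {m : ℕ}

lemma orderOf_a_eq (hm : 1 ≤ m) (i : ZMod (2 * 2 ^ (m - 1))) :
    haveI : NeZero (2 ^ (m - 1)) := ⟨pow_ne_zero _ two_ne_zero⟩
    orderOf (a i : QuaternionGroup (2 ^ (m - 1))) = addOrderOf i := by
  haveI : NeZero (2 ^ (m - 1)) := ⟨pow_ne_zero _ two_ne_zero⟩
  haveI : NeZero (2 * 2 ^ (m - 1)) := ⟨by positivity⟩
  rw [QuaternionGroup.orderOf_a, ← ZMod.addOrderOf_coe i.val (NeZero.ne _),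
    ZMod.natCast_zmod_val]

lemma Nq_count (hm : 2 ≤ m) (d : ℕ) :
    haveI : NeZero (2 ^ (m - 1)) := ⟨pow_ne_zero _ two_ne_zero⟩
    ((univ : Finset (QuaternionGroup (2 ^ (m - 1)))).filter fun v => orderOf v = d).card
      = (if d = 4 then 2 ^ m else 0) + (if d ∣ 2 ^ m then d.totient else 0) := by
  haveI : NeZero (2 ^ (m - 1)) := ⟨pow_ne_zero _ two_ne_zero⟩
  have key : ((univ : Finset (QuaternionGroup (2 ^ (m - 1)))).filter fun v => orderOf v = d)
      = ((univ : Finset (ZMod (2 * 2 ^ (m - 1)))).filter fun i => orderOf (xa i : QuaternionGroup (2 ^ (m-1))) = d).image xa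
        ∪ ((univ : Finset (ZMod (2 * 2 ^ (m - 1)))).filter fun i => orderOf (a i : QuaternionGroup (2 ^ (m-1))) = d).image a := by
    ext v
    rcases v with i | i <;> simp <;> split_ifs <;> simp_all
  rw [key, Finset.card_union_of_disjoint, Finset.card_image_of_injective _ (fun i j h => by injection h),
    Finset.card_image_of_injective _ (fun i j h => by injection h)]
  · congr 1
    · by_cases h4 : d = 4
      · subst h4
        simp [QuaternionGroup.orderOf_xa, ZMod.card, two_mul_pow (show 1 ≤ m by omega)]
      · rw [if_neg h4, Finset.card_eq_zero, Finset.filter_eq_empty_iff]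
        intro i _
        rw [QuaternionGroup.orderOf_xa]
        exact fun h => h4 h.symm
    · have : ∀ i : ZMod (2 * 2 ^ (m - 1)),
          orderOf (a i : QuaternionGroup (2 ^ (m-1))) = addOrderOf i := orderOf_a_eq (by omega)
      simp only [this]
      rw [zmod_count, two_mul_pow (by omega : 1 ≤ m)]
  · simp only [Finset.disjoint_left, Finset.mem_image]
    rintro v ⟨i, _, rfl⟩ ⟨j, _, h⟩
    cases h

lemma orderOf_quat_dvd (hm : 2 ≤ m) (v : QuaternionGroup (2 ^ (m - 1))) :
    orderOf v ∣ 2 ^ m := by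
  haveI : NeZero (2 ^ (m - 1)) := ⟨pow_ne_zero _ two_ne_zero⟩
  rcases v with i | i
  · rw [orderOf_a_eq (by omega)]
    have := addOrderOf_dvd_card (x := i)
    rw [ZMod.card] at this
    rw [← two_mul_pow (show 1 ≤ m by omega)]
    exact this
  · rw [QuaternionGroup.orderOf_xa]
    exact (show (4:ℕ) = 2^2 by norm_num) ▸ pow_dvd_pow 2 hm

end Specific



section Prod

lemma orderOf_fst_dvd_two (u : Multiplicative (ZMod 2)) : orderOf u ∣ 2 := by
  have := orderOf_dvd_card (x := u)
  rwa [Fintype.card_multiplicative, ZMod.card] at this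

lemma card_filter_snd {A B : Type*} [Fintype A] [Fintype B] [DecidableEq A] [DecidableEq B]
    (p : B → Prop) [DecidablePred p] :
    ((univ : Finset (A × B)).filter fun g => p g.2).card
      = Fintype.card A * (univ.filter p).card := by
  rw [show ((univ : Finset (A × B)).filter fun g => p g.2) = univ ×ˢ (univ.filter p) by
    ext ⟨a, b⟩; simp]
  rw [Finset.card_product, Finset.card_univ]

variable {Q : Type*} [Group Q]

lemma orderOf_prod_eq_pow {k : ℕ} (hk : 2 ≤ k) (g : Multiplicative (ZMod 2) × Q) :
    orderOf g = 2 ^ k ↔ orderOf g.2 = 2 ^ k := by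
  rw [Prod.orderOf]
  have hu := orderOf_fst_dvd_two g.1
  constructor
  · intro h
    have h2 : orderOf g.2 ∣ 2 ^ k := h ▸ dvd_lcm_right _ _
    have h3 : (2 : ℕ) ^ k ∣ 2 * orderOf g.2 :=
      h ▸ ((Nat.lcm_dvd_mul _ _).trans (Nat.mul_dvd_mul_right hu _))
    rw [← two_mul_pow (show 1 ≤ k by omega)] at h3
    have h4 : (2 : ℕ) ^ (k - 1) ∣ orderOf g.2 := (mul_dvd_mul_iff_left (two_ne_zero)).1 h3
    have h5 : orderOf g.1 ∣ orderOf g.2 := by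
      refine hu.trans (dvd_trans ?_ h4)
      calc (2:ℕ) = 2 ^ 1 := (pow_one 2).symm
      _ ∣ 2 ^ (k - 1) := pow_dvd_pow 2 (by omega)
    have h6 : Nat.lcm (orderOf g.1) (orderOf g.2) = orderOf g.2 :=
      Nat.dvd_antisymm (Nat.lcm_dvd h5 dvd_rfl) (Nat.dvd_lcm_right _ _)
    rwa [h6] at h
  · intro h
    have : orderOf g.1 ∣ 2 ^ k := hu.trans (by
      calc (2:ℕ) = 2 ^ 1 := (pow_one 2).symm
      _ ∣ 2 ^ k := pow_dvd_pow 2 (by omega))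
    rw [h]
    exact Nat.dvd_antisymm (Nat.lcm_dvd this dvd_rfl) (Nat.dvd_lcm_right _ _)

end Prod

section Main

variable {m : ℕ}

local notation "G" => Multiplicative (ZMod 2) × QuaternionGroup (2 ^ (m - 1))

lemma NG_pow (hm : 2 ≤ m) {k : ℕ} (hk : 2 ≤ k) :
    haveI : NeZero (2 ^ (m - 1)) := ⟨pow_ne_zero _ two_ne_zero⟩
    ((univ : Finset G).filter fun g => orderOf g = 2 ^ k).card
      = 2 * ((if 2 ^ k = 4 then 2 ^ m else 0) + (if 2 ^ k ∣ 2 ^ m then (2 ^ k).totient else 0)) := by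
  classical
  haveI : NeZero (2 ^ (m - 1)) := ⟨pow_ne_zero _ two_ne_zero⟩
  have hpred : ((univ : Finset G).filter fun g => orderOf g = 2 ^ k)
      = (univ : Finset (Multiplicative (ZMod 2))) ×ˢ
        ((univ : Finset (QuaternionGroup (2 ^ (m - 1)))).filter fun v => orderOf v = 2 ^ k) := by
    ext ⟨u, v⟩
    simp [orderOf_prod_eq_pow hk]
  rw [hpred, Finset.card_product, Finset.card_univ, Fintype.card_multiplicative, ZMod.card,
    Nq_count hm]

lemma NG_one :
    haveI : NeZero (2 ^ (m - 1)) := ⟨pow_ne_zero _ two_ne_zero⟩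
    ((univ : Finset G).filter fun g => orderOf g = 1).card = 1 := by
  haveI : NeZero (2 ^ (m - 1)) := ⟨pow_ne_zero _ two_ne_zero⟩
  have : ((univ : Finset G).filter fun g => orderOf g = 1) = {1} := by
    ext g; simp [orderOf_eq_one_iff]
  rw [this, Finset.card_singleton]

lemma NG_two (hm : 2 ≤ m) :
    haveI : NeZero (2 ^ (m - 1)) := ⟨pow_ne_zero _ two_ne_zero⟩
    ((univ : Finset G).filter fun g => orderOf g = 2).card = 3 := by
  classical
  haveI : NeZero (2 ^ (m - 1)) := ⟨pow_ne_zero _ two_ne_zero⟩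
  have h1 : ((univ : Finset G).filter fun g => orderOf g = 2)
      = ((univ : Finset G).filter fun g => g ^ 2 = 1) \ {1} := by
    ext g
    simp only [Finset.mem_filter, Finset.mem_univ, true_and, Finset.mem_sdiff,
      Finset.mem_singleton]
    constructor
    · intro h
      constructor
      · have := pow_orderOf_eq_one g
        rwa [h] at this
      · rintro rfl
        rw [orderOf_one] at h
        exact absurd h (by norm_num)
    · rintro ⟨h1, h2⟩
      have := orderOf_dvd_iff_pow_eq_one.2 h1
      rcases (Nat.dvd_prime Nat.prime_two).1 this with h | h
      · exact absurd (orderOf_eq_one_iff.1 h) h2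
      · exact h
  have h2 : ((univ : Finset G).filter fun g => g ^ 2 = 1)
      = ((univ : Finset (Multiplicative (ZMod 2))).filter fun u => u ^ 2 = 1)
        ×ˢ ((univ : Finset (QuaternionGroup (2 ^ (m - 1)))).filter fun v => v ^ 2 = 1) := by
    ext ⟨u, v⟩
    simp [Prod.pow_mk, Prod.ext_iff]
  have hA : ((univ : Finset (Multiplicative (ZMod 2))).filter fun u => u ^ 2 = 1).card = 2 := by
    decide
  have hQ : ((univ : Finset (QuaternionGroup (2 ^ (m - 1)))).filter fun v => v ^ 2 = 1).card
      = 2 := by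
    have : ((univ : Finset (QuaternionGroup (2 ^ (m - 1)))).filter fun v => v ^ 2 = 1)
        = ((univ : Finset (QuaternionGroup (2 ^ (m - 1)))).filter fun v => orderOf v = 1)
          ∪ ((univ : Finset (QuaternionGroup (2 ^ (m - 1)))).filter fun v => orderOf v = 2) := by
      ext v
      simp only [Finset.mem_filter, Finset.mem_univ, true_and, Finset.mem_union,
        ← orderOf_dvd_iff_pow_eq_one, Nat.dvd_prime Nat.prime_two]
    have hdisj : Disjoint
        ((univ : Finset (QuaternionGroup (2 ^ (m - 1)))).filter fun v => orderOf v = 1)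
        ((univ : Finset (QuaternionGroup (2 ^ (m - 1)))).filter fun v => orderOf v = 2) := by
      simp only [Finset.disjoint_left, Finset.mem_filter]
      rintro v ⟨_, h1⟩ ⟨_, h2⟩
      omega
    rw [this, Finset.card_union_of_disjoint hdisj, Nq_count hm, Nq_count hm,
      if_neg (by norm_num : ¬(1:ℕ) = 4), if_neg (by norm_num : ¬(2:ℕ) = 4),
      if_pos (one_dvd _), if_pos (dvd_pow_self 2 (show m ≠ 0 by omega))]
    simp [Nat.totient_one, Nat.totient_two]
  have hsub : ({1} : Finset G) ⊆ (univ : Finset G).filter fun g => g ^ 2 = 1 := by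
    simp
  rw [h1, Finset.card_sdiff_of_subset hsub, h2, Finset.card_product, hA, hQ, Finset.card_singleton]

lemma NG_large (hm : 2 ≤ m) {k : ℕ} (hk : m < k) :
    haveI : NeZero (2 ^ (m - 1)) := ⟨pow_ne_zero _ two_ne_zero⟩
    ((univ : Finset G).filter fun g => orderOf g = 2 ^ k).card = 0 := by
  haveI : NeZero (2 ^ (m - 1)) := ⟨pow_ne_zero _ two_ne_zero⟩
  rw [Finset.card_eq_zero, Finset.filter_eq_empty_iff]
  intro g _ hg
  have h2 := (orderOf_prod_eq_pow (by omega) g).1 hg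
  have := h2 ▸ orderOf_quat_dvd hm g.2
  have := (Nat.pow_dvd_pow_iff_le_right one_lt_two).1 this
  omega

end Main

lemma sum_helper {m : ℕ} (hm : 2 ≤ m) (c : ℕ → ℕ) (h0 : c 0 = 1) (h1 : c 1 = 3)
    (h2 : c 2 = 2 ^ m + 2) (hmid : ∀ k, 3 ≤ k → k ≤ m → c k = 2)
    (hl : ∀ k, m < k → c k = 0) :
    ∑ k ∈ Finset.range (m + 3), c k = 2 ^ m + 2 * m + 2 := by
  obtain ⟨P, hP⟩ : ∃ P, 2 ^ m = P := ⟨_, rfl⟩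
  rw [hP] at h2 ⊢
  rw [show m + 3 = (m + 1) + 1 + 1 by omega, Finset.sum_range_succ, Finset.sum_range_succ,
    hl _ (by omega), hl _ (by omega)]
  rw [Finset.range_eq_Ico, ← Finset.sum_Ico_consecutive c (Nat.zero_le 3) (by omega : 3 ≤ m + 1)]
  have hIco : ∑ k ∈ Finset.Ico 3 (m + 1), c k = 2 * (m + 1 - 3) := by
    trans ∑ _k ∈ Finset.Ico 3 (m + 1), 2
    · refine Finset.sum_congr rfl fun k hk => ?_
      rw [Finset.mem_Ico] at hk
      exact hmid k hk.1 (by omega)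
    · rw [Finset.sum_const, Nat.card_Ico, smul_eq_mul, mul_comm]
  have h03 : ∑ k ∈ Finset.Ico 0 3, c k = P + 6 := by
    rw [Nat.Ico_zero_eq_range, Finset.sum_range_succ, Finset.sum_range_succ,
      Finset.sum_range_one, h0, h1, h2]
    omega
  rw [hIco, h03]
  omega

/-- For `m ≥ 2`, the number of cyclic subgroups of `ℤ₂ × Q_{2^{m+1}}` equals `2^m + 2m + 2`. -/
theorem card_cyclic_subgroup_Z2_prod_quaternion (m : ℕ) (hm : 2 ≤ m) :
    Nat.card {H : Subgroup (Z2ProdQuaternion m) // IsCyclic H} = 2 ^ m + 2 * m + 2 := by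
  classical
  haveI : NeZero (2 ^ (m - 1)) := ⟨pow_ne_zero _ two_ne_zero⟩
  have hφ : ∀ k : ℕ, 1 ≤ k → (2 ^ k).totient = 2 ^ (k - 1) := by
    intro k hk
    rw [Nat.totient_prime_pow Nat.prime_two (by omega)]
    norm_num
  have hcard : Fintype.card (Z2ProdQuaternion m) = 2 ^ (m + 2) := by
    rw [Fintype.card_prod, Fintype.card_multiplicative, ZMod.card, QuaternionGroup.card,
      show m + 2 = (m - 1) + 3 by omega, pow_add]
    ring
  rw [card_cyclic_eq_sum, hcard, Nat.divisors_prime_pow Nat.prime_two, Finset.sum_map]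
  simp only [Function.Embedding.coeFn_mk]
  rw [show m + 2 + 1 = m + 3 by omega]
  refine sum_helper hm _ ?_ ?_ ?_ ?_ ?_
  · have h := fiber_count (G := Z2ProdQuaternion m) 1
    rw [NG_one, Nat.totient_one, mul_one] at h
    simpa using h.symm
  · have h := fiber_count (G := Z2ProdQuaternion m) 2
    rw [NG_two hm, Nat.totient_two, mul_one] at h
    simpa using h.symm
  · have h := fiber_count (G := Z2ProdQuaternion m) (2 ^ 2)
    rw [NG_pow hm le_rfl, if_pos (by norm_num), if_pos (pow_dvd_pow 2 hm),
      (by decide : ((2 : ℕ) ^ 2).totient = 2)] at h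
    exact Nat.eq_of_mul_eq_mul_right (show 0 < 2 by norm_num) (h.symm.trans (mul_comm 2 _))
  · intro k hk3 hkm
    have h := fiber_count (G := Z2ProdQuaternion m) (2 ^ k)
    have hne : (2 : ℕ) ^ k ≠ 4 := by
      intro hh
      have := Nat.pow_right_injective (le_refl 2) (hh.trans (by norm_num : (4 : ℕ) = 2 ^ 2))
      omega
    rw [NG_pow hm (by omega), if_neg hne, if_pos (pow_dvd_pow 2 hkm), hφ k (by omega),
      zero_add] at h
    have hpos : 0 < 2 ^ (k - 1) := pow_pos two_pos _
    exact (Nat.eq_of_mul_eq_mul_right hpos h.symm)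
  · intro k hk
    have h := fiber_count (G := Z2ProdQuaternion m) (2 ^ k)
    rw [NG_large hm hk] at h
    rcases Nat.mul_eq_zero.mp h.symm with h' | h'
    · exact h'
    · exact absurd h' (Nat.totient_pos.mpr (pow_pos two_pos _)).ne'
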